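/- The nonnegative reals [0,∞) with addition, endowed with the topology generated by the sets [a,∞) for a ≥ 0, form a cancellative compact topological monoid with open shifts which is not a group. -/

import Mathlib

open Topology

/-- The upper-ray topology on [0, ∞): generated by the sets [a, ∞), a ≥ 0. -/
def upperTop : TopologicalSpace {x : ℝ // 0 ≤ x} :=
  TopologicalSpace.generateFrom
    (Set.range fun a : {x : ℝ // 0 ≤ x} => {x : {x : ℝ // 0 ≤ x} | a ≤ x})

lemma upperTop_isOpen_iff {U : Set {x : ℝ // 0 ≤ x}} :
    IsOpen[upperTop] U ↔ ∀ ⦃x⦄, x ∈ U → ∀ ⦃y⦄, x ≤ y → y ∈ U := by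
  constructor
  · intro h
    induction h with
    | basic s hs =>
      obtain ⟨a, rfl⟩ := hs
      intro x hx y hxy
      exact le_trans hx hxy
    | univ => intro x _ y _; trivial
    | inter s t _ _ ihs iht =>
      intro x hx y hxy
      exact ⟨ihs hx.1 hxy, iht hx.2 hxy⟩
    | sUnion S _ ih =>
      rintro x ⟨s, hs, hxs⟩ y hxy
      exact ⟨s, hs, ih s hs hxs hxy⟩
  · intro h
    letI : TopologicalSpace {x : ℝ // 0 ≤ x} := upperTop
    have : U = ⋃ a ∈ U, {x : {x : ℝ // 0 ≤ x} | a ≤ x} := by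
      ext x
      simp only [Set.mem_iUnion, Set.mem_setOf_eq]
      exact ⟨fun hx => ⟨x, hx, le_refl x⟩, fun ⟨a, ha, hax⟩ => h ha hax⟩
    rw [this]
    exact isOpen_biUnion fun a _ => TopologicalSpace.GenerateOpen.basic _ ⟨a, rfl⟩

/-- [0, ∞) with addition and the topology generated by the rays [a, ∞) is a
cancellative compact topological monoid with open shifts which is not a group. -/
theorem stmt_14 :
    Continuous[@instTopologicalSpaceProd _ _ upperTop upperTop, upperTop]
      (fun p : {x : ℝ // 0 ≤ x} × {x : ℝ // 0 ≤ x} => p.1 + p.2) ∧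
    @CompactSpace {x : ℝ // 0 ≤ x} upperTop ∧
    (∀ a : {x : ℝ // 0 ≤ x},
      @IsOpenMap _ _ upperTop upperTop (fun x => a + x) ∧
      @IsOpenMap _ _ upperTop upperTop (fun x => x + a)) ∧
    (∀ a x y : {x : ℝ // 0 ≤ x}, (a + x = a + y → x = y) ∧ (x + a = y + a → x = y)) ∧
    ¬(∀ x : {x : ℝ // 0 ≤ x}, ∃ y, x + y = 0) := by
  letI : TopologicalSpace {x : ℝ // 0 ≤ x} := upperTop
  refine ⟨?_, ?_, ?_, ?_, ?_⟩
  · rw [continuous_def]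
    intro U hU
    rw [upperTop_isOpen_iff] at hU
    have key : (fun p : {x : ℝ // 0 ≤ x} × {x : ℝ // 0 ≤ x} => p.1 + p.2) ⁻¹' U =
        ⋃ p ∈ (fun p : {x : ℝ // 0 ≤ x} × {x : ℝ // 0 ≤ x} => p.1 + p.2) ⁻¹' U,
          {x : {x : ℝ // 0 ≤ x} | p.1 ≤ x} ×ˢ {y : {x : ℝ // 0 ≤ x} | p.2 ≤ y} := by
      ext q
      simp only [Set.mem_iUnion, Set.mem_preimage, Set.mem_prod, Set.mem_setOf_eq]
      constructor
      · intro hq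
        exact ⟨q, hq, le_refl _, le_refl _⟩
      · rintro ⟨p, hp, h1, h2⟩
        exact hU hp (add_le_add h1 h2)
    rw [key]
    have hb : ∀ a : {x : ℝ // 0 ≤ x}, IsOpen {x : {x : ℝ // 0 ≤ x} | a ≤ x} :=
      fun a => TopologicalSpace.GenerateOpen.basic _ ⟨a, rfl⟩
    exact isOpen_biUnion fun p _ => (hb p.1).prod (hb p.2)
  · constructor
    refine isCompact_of_finite_subcover fun {ι} U hU hcov => ?_
    have h0 : (0 : {x : ℝ // 0 ≤ x}) ∈ ⋃ i, U i := hcov trivial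
    obtain ⟨i, hi⟩ := Set.mem_iUnion.mp h0
    refine ⟨{i}, fun x _ => ?_⟩
    simp only [Finset.mem_singleton, Set.iUnion_iUnion_eq_left]
    exact (upperTop_isOpen_iff.mp (hU i)) hi x.2
  · intro a
    constructor <;> intro U hU <;> rw [upperTop_isOpen_iff] at hU ⊢ <;>
      rintro _ ⟨x, hx, rfl⟩ y hy
    · have hay : a.1 + x.1 ≤ y.1 := hy
      refine ⟨⟨y.1 - a.1, by linarith [x.2]⟩, hU hx ?_, ?_⟩
      · show x.1 ≤ y.1 - a.1
        linarith
      · exact Subtype.ext (show a.1 + (y.1 - a.1) = y.1 by ring)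
    · have hay : x.1 + a.1 ≤ y.1 := hy
      refine ⟨⟨y.1 - a.1, by linarith [x.2]⟩, hU hx ?_, ?_⟩
      · show x.1 ≤ y.1 - a.1
        linarith
      · exact Subtype.ext (show (y.1 - a.1) + a.1 = y.1 by ring)
  · intro a x y
    constructor <;> intro h <;> apply Subtype.ext <;>
      have h' := congrArg Subtype.val h
    · have : a.1 + x.1 = a.1 + y.1 := h'
      linarith
    · have : x.1 + a.1 = y.1 + a.1 := h'
      linarith
  · intro h
    obtain ⟨y, hy⟩ := h 1
    have h' : (1 : ℝ) + y.1 = 0 := congrArg Subtype.val hy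
    linarith [y.2]
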